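/- Let (X_t)_{t≥0} be a trajectory of the 3-color firefly cellular automaton on ℤ: X_{t+1}(v) = X_t(v) if X_t(v) = 2 and some neighbor u ∈ {v−1, v+1} has X_t(u) = 1, and X_{t+1}(v) = X_t(v) + 1 (mod 3) otherwise. Then for all t ≥ 1 and all x ∈ ℤ, the color triple (X_t(x−1), X_t(x), X_t(x+1)) is neither (1,2,0) nor (0,2,1). -/
import Mathlib


/-- One synchronous step of the 3-color firefly cellular automaton on `ℤ`:
a site keeps its color iff it has color `2` and a neighbor has color `1`;
otherwise it advances its color by `1 (mod 3)`. -/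
def fcaStep (c : ℤ → ZMod 3) : ℤ → ZMod 3 := fun v =>
  if c v = 2 ∧ (c (v - 1) = 1 ∨ c (v + 1) = 1) then c v else c v + 1

lemma fca_key (a b c d e : ZMod 3) :
    ((if b = 2 ∧ (a = 1 ∨ c = 1) then b else b + 1),
     (if c = 2 ∧ (b = 1 ∨ d = 1) then c else c + 1),
     (if d = 2 ∧ (c = 1 ∨ e = 1) then d else d + 1)) ≠ ((1 : ZMod 3), 2, 0) ∧
    ((if b = 2 ∧ (a = 1 ∨ c = 1) then b else b + 1),
     (if c = 2 ∧ (b = 1 ∨ d = 1) then c else c + 1),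
     (if d = 2 ∧ (c = 1 ∨ e = 1) then d else d + 1)) ≠ ((0 : ZMod 3), 2, 1) := by
  revert a b c d e; decide

/-- along any FCA trajectory on `ℤ`, for every `t ≥ 1` and every
site `x`, the color triple at `(x-1,x,x+1)` is neither `(1,2,0)` nor `(0,2,1)`. -/
theorem stmt_10 (X : ℕ → ℤ → ZMod 3)
    (hX : ∀ t v, X (t + 1) v = fcaStep (X t) v) :
    ∀ t : ℕ, 1 ≤ t → ∀ x : ℤ,
      (X t (x - 1), X t x, X t (x + 1)) ≠ ((1 : ZMod 3), 2, 0) ∧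
      (X t (x - 1), X t x, X t (x + 1)) ≠ ((0 : ZMod 3), 2, 1) := by
  intro t ht x
  obtain ⟨s, rfl⟩ : ∃ s, t = s + 1 := ⟨t - 1, by omega⟩
  have h1 := hX s (x - 1)
  have h2 := hX s x
  have h3 := hX s (x + 1)
  have e1 : x - 1 - 1 = x - 2 := by ring
  have e2 : x - 1 + 1 = x := by ring
  have e3 : x + 1 - 1 = x := by ring
  have e4 : x + 1 + 1 = x + 2 := by ring
  simp only [fcaStep] at h1 h2 h3
  rw [e1, e2] at h1
  rw [e3, e4] at h3
  rw [h1, h2, h3]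
  exact fca_key (X s (x - 2)) (X s (x - 1)) (X s x) (X s (x + 1)) (X s (x + 2))
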